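/- Let (a,b,c,d) be a conflict quadruple in G where both internal vertices b and c have degree exactly 2 in G. Then every neighbor of a (other than b) is at distance exactly 3 from c, and every neighbor of d (other than c) is at distance exactly 3 from b. -/

import Mathlib

open SimpleGraph

private lemma aux17 {V : Type*} [Fintype V]
    (G : SimpleGraph V) [DecidableRel G.Adj] (a b c d : V)
    (hab : G.Adj a b) (hbc : G.Adj b c) (hcd : G.Adj c d)
    (hdist : G.dist a d = 3)
    (hdegb : G.degree b = 2) (hdegc : G.degree c = 2) :
    ∀ u : V, G.Adj a u → u ≠ b → G.dist u c = 3 := by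
  intro u hau hub
  classical
  have hbd : b ≠ d := by
    rintro rfl
    rw [dist_eq_one_iff_adj.mpr hab] at hdist; omega
  have hac : a ≠ c := by
    rintro rfl
    rw [dist_eq_one_iff_adj.mpr hcd] at hdist; omega
  have had : ¬ G.Adj a d := fun h => by
    rw [dist_eq_one_iff_adj.mpr h] at hdist; omega
  -- neighbor sets
  have hNc : G.neighborFinset c = {b, d} := by
    apply Finset.eq_of_superset_of_card_ge
    · intro x hx
      simp only [Finset.mem_insert, Finset.mem_singleton] at hx
      rcases hx with rfl | rfl
      · exact (mem_neighborFinset G c x).mpr hbc.symm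
      · exact (mem_neighborFinset G c x).mpr hcd
    · rw [← card_neighborFinset_eq_degree] at hdegc
      rw [hdegc, Finset.card_insert_of_notMem (by simp [hbd]), Finset.card_singleton]
  have hNb : G.neighborFinset b = {a, c} := by
    apply Finset.eq_of_superset_of_card_ge
    · intro x hx
      simp only [Finset.mem_insert, Finset.mem_singleton] at hx
      rcases hx with rfl | rfl
      · exact (mem_neighborFinset G b x).mpr hab.symm
      · exact (mem_neighborFinset G b x).mpr hbc
    · rw [← card_neighborFinset_eq_degree] at hdegb
      rw [hdegb, Finset.card_insert_of_notMem (by simp [hac]), Finset.card_singleton]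
  have hadjc : ∀ x, G.Adj x c → x = b ∨ x = d := by
    intro x hx
    have : x ∈ G.neighborFinset c := (mem_neighborFinset G c x).mpr hx.symm
    rw [hNc] at this; simpa using this
  have hadjb : ∀ x, G.Adj x b → x = a ∨ x = c := by
    intro x hx
    have : x ∈ G.neighborFinset b := (mem_neighborFinset G b x).mpr hx.symm
    rw [hNb] at this; simpa using this
  have huc : u ≠ c := by
    rintro rfl
    have : G.dist a d ≤ 2 := by
      have := G.dist_le ((Walk.cons hau (Walk.cons hcd Walk.nil)))
      simpa using this
    omega
  have hud : u ≠ d := fun h => had (h ▸ hau)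
  -- upper bound
  have hle : G.dist u c ≤ 3 := by
    have := G.dist_le (Walk.cons hau.symm (Walk.cons hab (Walk.cons hbc Walk.nil)))
    simpa using this
  -- lower bounds
  have h0 : G.dist u c ≠ 0 := by
    rw [dist_ne_zero_iff_ne_and_reachable]
    exact ⟨huc, ⟨Walk.cons hau.symm (Walk.cons hab (Walk.cons hbc Walk.nil))⟩⟩
  have h1 : G.dist u c ≠ 1 := by
    intro h
    rcases hadjc u (dist_eq_one_iff_adj.mp h) with rfl | rfl
    · exact hub rfl
    · exact had hau
  have h2 : G.dist u c ≠ 2 := by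
    intro h
    obtain ⟨p, hp⟩ := exists_walk_of_dist_ne_zero h0
    rw [h] at hp
    cases p with
    | nil => simp at hp
    | cons h1' q =>
      rename_i x
      cases q with
      | nil => simp at hp
      | cons h2' r =>
        rename_i y
        cases r with
        | cons h3' r' => simp [Walk.length_cons] at hp
        | nil =>
          rcases hadjc x h2' with hx | hx
          · rcases hadjb u (hx ▸ h1') with hu | hu
            · exact G.loopless.irrefl u (hu ▸ hau)
            · exact huc hu
          · have : G.dist a d ≤ 2 := by
              have := G.dist_le ((Walk.cons hau (Walk.cons (hx ▸ h1') Walk.nil)))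
              simpa using this
            omega
  omega

/-- in a conflict quadruple (a,b,c,d) with degree-two internal
vertices, every other neighbor of a is at distance exactly 3 from c, and
every other neighbor of d is at distance exactly 3 from b. -/
theorem conflict_quadruple_degreeTwo_internal {V : Type*} [Fintype V]
    (G : SimpleGraph V) [DecidableRel G.Adj] (a b c d : V)
    (hab : G.Adj a b) (hbc : G.Adj b c) (hcd : G.Adj c d)
    (hdist : G.dist a d = 3)
    (hdegb : G.degree b = 2) (hdegc : G.degree c = 2) :
    (∀ u : V, G.Adj a u → u ≠ b → G.dist u c = 3) ∧
      (∀ w : V, G.Adj d w → w ≠ c → G.dist w b = 3) := by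
  refine ⟨aux17 G a b c d hab hbc hcd hdist hdegb hdegc, ?_⟩
  exact aux17 G d c b a hcd.symm hbc.symm hab.symm (by rw [dist_comm]; exact hdist) hdegc hdegb
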